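/- Let r ≥ 1 and 0 < a, b, c, d < r be integers, and suppose the Laurent polynomial identity z^{-c} + z^{r-c} + z^a + z^{a-r} + z^{c-a} + z^{d-b} = z^c + z^{c-r} + z^{-a} + z^{r-a} + z^{a-c} + z^{b-d} holds in ℤ[z, z^{-1}], together with the constraints a ≠ c and a < c. Then a contradiction follows; i.e., no such integers exist. -/

import Mathlib

open LaurentPolynomial

theorem ban_list_case3 (r a b c d : ℤ) (hr : 1 ≤ r)
    (ha : 0 < a) (har : a < r) (hb : 0 < b) (hbr : b < r)
    (hc : 0 < c) (hcr : c < r) (hd : 0 < d) (hdr : d < r)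
    (hac : a ≠ c) (hlt : a < c)
    (hid : (T (-c) + T (r - c) + T a + T (a - r) + T (c - a) + T (d - b) :
        LaurentPolynomial ℤ)
      = T c + T (c - r) + T (-a) + T (r - a) + T (a - c) + T (b - d)) :
    False := by
  have key : ∀ n : ℤ,
      ((if -c = n then (1:ℤ) else 0) + (if r - c = n then 1 else 0) +
        (if a = n then 1 else 0) + (if a - r = n then 1 else 0) +
        (if c - a = n then 1 else 0) + (if d - b = n then 1 else 0))
      = ((if c = n then 1 else 0) + (if c - r = n then 1 else 0) +
        (if -a = n then 1 else 0) + (if r - a = n then 1 else 0) +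
        (if a - c = n then 1 else 0) + (if b - d = n then 1 else 0)) := by
    intro n
    have h : (Finsupp.single (-c) 1 + Finsupp.single (r - c) 1 + Finsupp.single a 1
          + Finsupp.single (a - r) 1 + Finsupp.single (c - a) 1 + Finsupp.single (d - b) 1
          : ℤ →₀ ℤ) n
        = (Finsupp.single c 1 + Finsupp.single (c - r) 1 + Finsupp.single (-a) 1
          + Finsupp.single (r - a) 1 + Finsupp.single (a - c) 1 + Finsupp.single (b - d) 1
          : ℤ →₀ ℤ) n := congrArg (fun p : LaurentPolynomial ℤ => p.coeff n) hid
    simpa [Finsupp.single_apply] using h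
  have H1 : r = 2 * c ∨ b - d = -c := by
    have h := key (-c)
    rw [if_pos (rfl : (-c : ℤ) = -c),
      if_neg (show ¬(r - c = -c) by omega),
      if_neg (show ¬(a = -c) by omega),
      if_neg (show ¬(c - a = -c) by omega),
      if_neg (show ¬(c = -c) by omega),
      if_neg (show ¬(-a = -c) by omega),
      if_neg (show ¬(r - a = -c) by omega),
      if_neg (show ¬(a - c = -c) by omega)] at h
    split_ifs at h <;> omega
  have H2 : r = 2 * a ∨ b - d = a := by
    have h := key a
    rw [if_pos (rfl : (a : ℤ) = a),
      if_neg (show ¬(-c = a) by omega),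
      if_neg (show ¬(a - r = a) by omega),
      if_neg (show ¬(c = a) by omega),
      if_neg (show ¬(c - r = a) by omega),
      if_neg (show ¬(-a = a) by omega),
      if_neg (show ¬(a - c = a) by omega)] at h
    split_ifs at h <;> omega
  rcases H1 with H1 | H1 <;> rcases H2 with H2 | H2
  · omega
  · -- r = 2c, b - d = a : evaluate at c - a
    have h := key (c - a)
    rw [if_pos (rfl : (c - a : ℤ) = c - a),
      if_neg (show ¬(-c = c - a) by omega),
      if_neg (show ¬(r - c = c - a) by omega),
      if_neg (show ¬(a - r = c - a) by omega),
      if_neg (show ¬(d - b = c - a) by omega),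
      if_neg (show ¬(c = c - a) by omega),
      if_neg (show ¬(c - r = c - a) by omega),
      if_neg (show ¬(-a = c - a) by omega),
      if_neg (show ¬(r - a = c - a) by omega),
      if_neg (show ¬(a - c = c - a) by omega)] at h
    split_ifs at h <;> omega
  · -- b - d = -c, r = 2a : evaluate at a - c
    have h := key (a - c)
    rw [if_pos (rfl : (a - c : ℤ) = a - c),
      if_neg (show ¬(-c = a - c) by omega),
      if_neg (show ¬(r - c = a - c) by omega),
      if_neg (show ¬(a = a - c) by omega),
      if_neg (show ¬(a - r = a - c) by omega),
      if_neg (show ¬(c - a = a - c) by omega),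
      if_neg (show ¬(d - b = a - c) by omega),
      if_neg (show ¬(c = a - c) by omega),
      if_neg (show ¬(r - a = a - c) by omega),
      if_neg (show ¬(b - d = a - c) by omega)] at h
    split_ifs at h <;> omega
  · omega
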